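/- Every Banach space satisfying property (S') satisfies property (S); hence properties (S) and (S') are equivalent for Banach spaces. -/

import Mathlib

/-- Property (S): for every quasi-finite set `A` (infinite, meeting every closed ball
in a finite set) there is a dense set `Y` such that for every `y ∈ Y` and every `n`
some open ball centred at `y` contains exactly `n` points of `A`. -/
def SteinhausS (X : Type*) [NormedAddCommGroup X] [NormedSpace ℝ X] : Prop :=
  ∀ A : Set X, A.Infinite → (∀ (x : X) (r : ℝ), (A ∩ Metric.closedBall x r).Finite) →
    ∃ Y : Set X, Dense Y ∧ ∀ y ∈ Y, ∀ n : ℕ, ∃ r > (0 : ℝ),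
      (A ∩ Metric.ball y r).Finite ∧ (A ∩ Metric.ball y r).ncard = n

/-- Property (S'): the unit sphere does not look locally alike at two distinct points. -/
def SteinhausS' (X : Type*) [NormedAddCommGroup X] [NormedSpace ℝ X] : Prop :=
  ∀ x y : X, ‖x‖ = 1 → ‖y‖ = 1 → x ≠ y → ∀ δ : ℝ, 0 < δ →
    ∃ z : X, ‖z‖ < δ ∧
      ((1 < ‖x + z‖ ∧ ‖y + z‖ < 1) ∨ (‖x + z‖ < 1 ∧ 1 < ‖y + z‖))

/-- In a nontrivial real normed space, every ball of positive radius is infinite. -/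
lemma steinhaus_ball_infinite {X : Type*} [NormedAddCommGroup X] [NormedSpace ℝ X]
    [Nontrivial X] (x : X) {ε : ℝ} (hε : 0 < ε) : (Metric.ball x ε).Infinite := by
  obtain ⟨v, hv⟩ := exists_ne (0 : X)
  have hvpos : 0 < ‖v‖ := norm_pos_iff.mpr hv
  have hmap : Set.MapsTo (fun t : ℝ => x + t • v) (Set.Ioo 0 (ε / ‖v‖)) (Metric.ball x ε) := by
    intro t ht
    rw [Metric.mem_ball, dist_eq_norm, add_sub_cancel_left, norm_smul, Real.norm_eq_abs,
      abs_of_pos ht.1]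
    calc t * ‖v‖ < ε / ‖v‖ * ‖v‖ := mul_lt_mul_of_pos_right ht.2 hvpos
      _ = ε := by field_simp
  have hinj : Set.InjOn (fun t : ℝ => x + t • v) (Set.Ioo 0 (ε / ‖v‖)) := by
    intro s _ t _ h
    simp only [add_right_inj] at h
    exact smul_left_injective ℝ hv h
  exact ((Set.Ioo_infinite (by positivity)).image hinj).mono hmap.image_subset

/-- Minimum distance selection: among points of a quasi-finite set at distance `> t`
from `y`, there is one of minimal distance. -/
lemma steinhaus_minlem {X : Type*} [NormedAddCommGroup X]
    {A : Set X} (hfin : ∀ (x : X) (r : ℝ), (A ∩ Metric.closedBall x r).Finite)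
    (y : X) (t : ℝ) (hne : ∃ a ∈ A, t < dist a y) :
    ∃ a₀ ∈ A, t < dist a₀ y ∧ ∀ a ∈ A, t < dist a y → dist a₀ y ≤ dist a y := by
  obtain ⟨w, hwA, hwt⟩ := hne
  have hK : (A ∩ Metric.closedBall y (dist w y) ∩ {a | t < dist a y}).Finite :=
    (hfin y (dist w y)).subset Set.inter_subset_left
  have hKne : (A ∩ Metric.closedBall y (dist w y) ∩ {a | t < dist a y}).Nonempty :=
    ⟨w, ⟨⟨hwA, by simp [Metric.mem_closedBall]⟩, hwt⟩⟩
  obtain ⟨a₀, ha₀, hmin⟩ := Set.exists_min_image _ (fun a => dist a y) hK hKne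
  refine ⟨a₀, ha₀.1.1, ha₀.2, ?_⟩
  intro a haA hat
  by_cases h : dist a y ≤ dist w y
  · exact hmin a ⟨⟨haA, Metric.mem_closedBall.mpr h⟩, hat⟩
  · have h1 : dist a₀ y ≤ dist w y := hmin w ⟨⟨hwA, by simp [Metric.mem_closedBall]⟩, hwt⟩
    exact le_trans h1 (le_of_not_ge h)

/-- The equidistant set of two distinct points has dense complement in a space
with property (S'). -/
lemma steinhaus_equidistant_dense_compl {X : Type*} [NormedAddCommGroup X] [NormedSpace ℝ X]
    (hS' : SteinhausS' X) (a b : X) (hab : a ≠ b) :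
    Dense {y : X | ‖y - a‖ = ‖y - b‖}ᶜ := by
  rw [← interior_eq_empty_iff_dense_compl, Set.eq_empty_iff_forall_notMem]
  intro x0 hx0
  obtain ⟨ε, hε, hball⟩ := Metric.mem_nhds_iff.mp (mem_interior_iff_mem_nhds.mp hx0)
  have hxE : ‖x0 - a‖ = ‖x0 - b‖ := by
    have h : x0 ∈ {y : X | ‖y - a‖ = ‖y - b‖} := interior_subset hx0
    exact h
  have hx0a : x0 ≠ a := by
    intro h
    rw [h] at hxE
    simp only [sub_self, norm_zero] at hxE
    exact hab (sub_eq_zero.mp (norm_eq_zero.mp hxE.symm))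
  have hxa0 : x0 - a ≠ 0 := sub_ne_zero.mpr hx0a
  have hrpos : 0 < ‖x0 - a‖ := norm_pos_iff.mpr hxa0
  have hrne : ‖x0 - a‖ ≠ 0 := ne_of_gt hrpos
  have hu : ‖‖x0 - a‖⁻¹ • (x0 - a)‖ = 1 := by
    rw [norm_smul, Real.norm_eq_abs, abs_of_pos (inv_pos.mpr hrpos)]
    field_simp
  have hv : ‖‖x0 - a‖⁻¹ • (x0 - b)‖ = 1 := by
    rw [norm_smul, Real.norm_eq_abs, abs_of_pos (inv_pos.mpr hrpos), ← hxE]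
    field_simp
  have huv : ‖x0 - a‖⁻¹ • (x0 - a) ≠ ‖x0 - a‖⁻¹ • (x0 - b) := by
    intro h
    exact hab (sub_right_injective (smul_right_injective X (inv_ne_zero hrne) h))
  obtain ⟨z, hz, hcase⟩ := hS' _ _ hu hv huv (ε / ‖x0 - a‖) (by positivity)
  have hw : x0 + ‖x0 - a‖ • z ∈ Metric.ball x0 ε := by
    rw [Metric.mem_ball, dist_eq_norm, add_sub_cancel_left, norm_smul, Real.norm_eq_abs,
      abs_of_pos hrpos]
    calc ‖x0 - a‖ * ‖z‖ < ‖x0 - a‖ * (ε / ‖x0 - a‖) := mul_lt_mul_of_pos_left hz hrpos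
      _ = ε := by field_simp
  have hwE : ‖x0 + ‖x0 - a‖ • z - a‖ = ‖x0 + ‖x0 - a‖ • z - b‖ := hball hw
  have hwa : x0 + ‖x0 - a‖ • z - a = ‖x0 - a‖ • (‖x0 - a‖⁻¹ • (x0 - a) + z) := by
    rw [smul_add, smul_inv_smul₀ hrne]; abel
  have hwb : x0 + ‖x0 - a‖ • z - b = ‖x0 - a‖ • (‖x0 - a‖⁻¹ • (x0 - b) + z) := by
    rw [smul_add, smul_inv_smul₀ hrne]; abel
  rw [hwa, hwb, norm_smul, norm_smul, Real.norm_eq_abs, abs_of_pos hrpos] at hwE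
  have heq := mul_left_cancel₀ hrne hwE
  rcases hcase with ⟨h1, h2⟩ | ⟨h1, h2⟩ <;> linarith

theorem stmt7 {X : Type*} [NormedAddCommGroup X] [NormedSpace ℝ X] [CompleteSpace X]
    (hS' : SteinhausS' X) : SteinhausS X := by
  intro A hAinf hfin
  classical
  -- the space is nontrivial
  obtain ⟨a0, ha0A, b0, hb0A, hab0⟩ := hAinf.nontrivial
  have hntX : Nontrivial X := ⟨a0, b0, hab0⟩
  -- A is countable
  have hAc : A.Countable := by
    have hsub : A ⊆ ⋃ n : ℕ, A ∩ Metric.closedBall 0 n := by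
      intro x hx
      obtain ⟨n, hn⟩ := exists_nat_ge (dist x 0)
      exact Set.mem_iUnion.mpr ⟨n, hx, Metric.mem_closedBall.mpr hn⟩
    exact ((Set.countable_iUnion fun n : ℕ => (hfin 0 n).countable).mono hsub)
  -- A is closed
  have hAcl : IsClosed A := by
    refine isClosed_of_closure_subset ?_
    intro x hx
    have h2 : x ∈ closure (A ∩ Metric.closedBall x 1) := by
      rw [Metric.mem_closure_iff] at hx ⊢
      intro ε hε
      obtain ⟨b, hbA, hbd⟩ := hx (min ε 1) (lt_min hε one_pos)
      refine ⟨b, ⟨hbA, Metric.mem_closedBall.mpr ?_⟩, lt_of_lt_of_le hbd (min_le_left _ _)⟩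
      rw [dist_comm]
      exact le_of_lt (lt_of_lt_of_le hbd (min_le_right _ _))
    rw [((hfin x 1).isClosed).closure_eq] at h2
    exact h2.1
  -- A has dense complement
  have hAd : Dense Aᶜ := by
    rw [← interior_eq_empty_iff_dense_compl, Set.eq_empty_iff_forall_notMem]
    intro x hx
    obtain ⟨ε, hε, hball⟩ := Metric.mem_nhds_iff.mp (mem_interior_iff_mem_nhds.mp hx)
    have hbf : (Metric.ball x ε).Finite :=
      (hfin x ε).subset (fun z hz => ⟨hball hz, Metric.ball_subset_closedBall hz⟩)
    exact steinhaus_ball_infinite x hε hbf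
  -- the family of open dense sets
  haveI := hAc.to_subtype
  set f : Option (↥A × ↥A) → Set X := fun i =>
    i.elim Aᶜ (fun p => if (p.1 : X) = (p.2 : X) then Set.univ
      else {y : X | ‖y - (p.1 : X)‖ = ‖y - (p.2 : X)‖}ᶜ) with hfdef
  have hopen : ∀ i, IsOpen (f i) := by
    rintro (_ | p)
    · exact hAcl.isOpen_compl
    · by_cases h : (p.1 : X) = (p.2 : X)
      · simp only [hfdef, Option.elim, if_pos h]; exact isOpen_univ
      · simp only [hfdef, Option.elim, if_neg h]
        exact (isClosed_eq ((continuous_id.sub continuous_const).norm)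
          ((continuous_id.sub continuous_const).norm)).isOpen_compl
  have hdense : ∀ i, Dense (f i) := by
    rintro (_ | p)
    · exact hAd
    · by_cases h : (p.1 : X) = (p.2 : X)
      · simp only [hfdef, Option.elim, if_pos h]; exact dense_univ
      · simp only [hfdef, Option.elim, if_neg h]
        exact steinhaus_equidistant_dense_compl hS' _ _ h
  have hD : Dense (⋂ i, f i) := dense_iInter_of_isOpen hopen hdense
  refine ⟨⋂ i, f i, hD, ?_⟩
  intro y hy n
  have hyA : y ∉ A := by
    have h := Set.mem_iInter.mp hy none
    simpa [hfdef] using h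
  have hinj : ∀ a ∈ A, ∀ b ∈ A, a ≠ b → dist a y ≠ dist b y := by
    intro a haA b hbA hab hEq
    have h := Set.mem_iInter.mp hy (some (⟨a, haA⟩, ⟨b, hbA⟩))
    simp only [hfdef, Option.elim, if_neg hab] at h
    apply h
    show ‖y - a‖ = ‖y - b‖
    rw [← dist_eq_norm, ← dist_eq_norm, dist_comm y a, dist_comm y b]
    exact hEq
  -- main induction: for each n there is a good radius avoiding all distances
  have key : ∀ m : ℕ, ∃ r > (0 : ℝ), (A ∩ Metric.ball y r).ncard = m ∧
      ∀ a ∈ A, dist a y ≠ r := by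
    intro m
    induction m with
    | zero =>
      have hne : ∃ a ∈ A, (0 : ℝ) < dist a y := by
        obtain ⟨a, ha⟩ := hAinf.nonempty
        exact ⟨a, ha, dist_pos.mpr (fun h => hyA (h ▸ ha))⟩
      obtain ⟨a₁, ha₁A, hd₁, hmin⟩ := steinhaus_minlem hfin y 0 hne
      refine ⟨dist a₁ y / 2, by linarith, ?_, ?_⟩
      · have hempty : A ∩ Metric.ball y (dist a₁ y / 2) = ∅ := by
          ext a
          simp only [Set.mem_inter_iff, Metric.mem_ball, Set.mem_empty_iff_false, iff_false,
            not_and]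
          intro haA hab
          have h0 : 0 < dist a y := dist_pos.mpr (fun h => hyA (h ▸ haA))
          have := hmin a haA h0
          linarith
        rw [hempty, Set.ncard_empty]
      · intro a haA h
        have h0 : 0 < dist a y := dist_pos.mpr (fun hh => hyA (hh ▸ haA))
        have := hmin a haA h0
        rw [h] at this
        linarith
    | succ m ih =>
      obtain ⟨r, hr, hcard, hner⟩ := ih
      have hfin_r : (A ∩ Metric.ball y r).Finite :=
        (hfin y r).subset (Set.inter_subset_inter_right _ Metric.ball_subset_closedBall)
      have hout : ∃ a ∈ A, r < dist a y := by
        obtain ⟨a, haA, hnot⟩ := (hAinf.diff (hfin y r)).nonempty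
        refine ⟨a, haA, ?_⟩
        by_contra h
        exact hnot ⟨haA, Metric.mem_closedBall.mpr (le_of_not_gt h)⟩
      obtain ⟨a₁, ha₁A, hd₁r, hmin₁⟩ := steinhaus_minlem hfin y r hout
      have hout₂ : ∃ a ∈ A, dist a₁ y < dist a y := by
        obtain ⟨a, haA, hnot⟩ := (hAinf.diff (hfin y (dist a₁ y))).nonempty
        refine ⟨a, haA, ?_⟩
        by_contra h
        exact hnot ⟨haA, Metric.mem_closedBall.mpr (le_of_not_gt h)⟩
      obtain ⟨a₂, ha₂A, hd₂, hmin₂⟩ := steinhaus_minlem hfin y (dist a₁ y) hout₂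
      refine ⟨(dist a₁ y + dist a₂ y) / 2, by linarith, ?_, ?_⟩
      · have hset : A ∩ Metric.ball y ((dist a₁ y + dist a₂ y) / 2) =
            insert a₁ (A ∩ Metric.ball y r) := by
          ext a
          simp only [Set.mem_inter_iff, Metric.mem_ball, Set.mem_insert_iff]
          constructor
          · rintro ⟨haA, hlt⟩
            by_cases hcase : dist a y < r
            · exact Or.inr ⟨haA, hcase⟩
            · left
              have h1 : r < dist a y := lt_of_le_of_ne (le_of_not_gt hcase) (Ne.symm (hner a haA))
              have h2 : dist a₁ y ≤ dist a y := hmin₁ a haA h1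
              have h3 : dist a y ≤ dist a₁ y := by
                by_contra hc
                have := hmin₂ a haA (lt_of_not_ge hc)
                linarith
              have heq : dist a y = dist a₁ y := le_antisymm h3 h2
              by_contra hne'
              exact hinj a haA a₁ ha₁A hne' heq
          · rintro (rfl | ⟨haA, hlt⟩)
            · exact ⟨ha₁A, by linarith⟩
            · exact ⟨haA, by linarith⟩
        have ha₁notin : a₁ ∉ A ∩ Metric.ball y r := by
          rintro ⟨-, hmem⟩
          rw [Metric.mem_ball] at hmem
          linarith
        rw [hset, Set.ncard_insert_of_notMem ha₁notin hfin_r, hcard]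
      · intro a haA h
        have h1 : r < dist a y := by rw [h]; linarith
        have h2 := hmin₁ a haA h1
        have h3 : dist a₁ y < dist a y := by rw [h]; linarith
        have h4 := hmin₂ a haA h3
        rw [h] at h4
        linarith
  obtain ⟨r, hr, hcard, -⟩ := key n
  exact ⟨r, hr, (hfin y r).subset (Set.inter_subset_inter_right _
    Metric.ball_subset_closedBall), hcard⟩
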